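/- Let φ ∈ P. Then the following conditions are equivalent: (i) φ ∈ CP ∩ coCP; (ii) φ∘α ∈ CP for all α ∈ CP ⋁ coCP; (iii) φ is a PPT-map. -/

import Mathlib

open scoped ComplexOrder Kronecker
open Matrix

namespace Paper

/-- The algebra `M_n` of `n × n` complex matrices. -/
abbrev Mat (n : ℕ) := Matrix (Fin n) (Fin n) ℂ

/-- Linear maps of `M_n` into itself. -/
abbrev MatMap (n : ℕ) := Mat n →ₗ[ℂ] Mat n

/-- The matrix algebra `M_n ⊗ M_n`, realized as matrices indexed by pairs. -/
abbrev BigMat (n : ℕ) := Matrix (Fin n × Fin n) (Fin n × Fin n) ℂ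

variable {n : ℕ}

/-- A map `φ : M_n → M_n` is positive if it maps positive semidefinite matrices to
positive semidefinite matrices.  The set of such maps is the cone `P`. -/
def IsPosMap (φ : MatMap n) : Prop :=
  ∀ a : Mat n, a.PosSemidef → (φ a).PosSemidef

/-- The Choi matrix `C_φ = Σ_{i,j} e_{ij} ⊗ φ(e_{ij})`. -/
noncomputable def choiMatrix (φ : MatMap n) : BigMat n :=
  Matrix.of fun p q => φ (Matrix.single p.1 q.1 1) p.2 q.2

/-- `φ` is completely positive iff its Choi matrix is positive semidefinite.
The set of such maps is the cone `CP`. -/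
def IsCP (φ : MatMap n) : Prop := (choiMatrix φ).PosSemidef

/-- The transpose map `a ↦ aᵀ` on `M_n`, as a linear map. -/
noncomputable def transposeMap (n : ℕ) : MatMap n where
  toFun a := a.transpose
  map_add' a b := Matrix.transpose_add a b
  map_smul' c a := Matrix.transpose_smul c a

/-- `φ` is co-completely positive if `t ∘ φ` is completely positive.  The set of
such maps is the cone `coCP`. -/
def IsCoCP (φ : MatMap n) : Prop := IsCP ((transposeMap n) ∘ₗ φ)

/-- A state on `M_n`: a positive linear functional with `ω(1) = 1`. -/
def IsState (ω : Mat n →ₗ[ℂ] ℂ) : Prop :=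
  (∀ a : Mat n, a.PosSemidef → 0 ≤ ω a) ∧ ω 1 = 1

/-- `φ` is super-positive if `φ(a) = Σ_i ω_i(a) b_i` with each `b_i` positive
semidefinite and each `ω_i` a state.  The set of such maps is the cone `SP`. -/
def IsSP (φ : MatMap n) : Prop :=
  ∃ (k : ℕ) (b : Fin k → Mat n) (ω : Fin k → (Mat n →ₗ[ℂ] ℂ)),
    (∀ i, (b i).PosSemidef) ∧ (∀ i, IsState (ω i)) ∧
      ∀ a : Mat n, φ a = ∑ i, ω i a • b i

/-- `ψ = φ*`, i.e. `Tr(φ(a) b) = Tr(a ψ(b))` for all `a, b`. -/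
def IsAdjointPair (φ ψ : MatMap n) : Prop :=
  ∀ a b : Mat n, (φ a * b).trace = (a * ψ b).trace

/-- The map `φ^t : a ↦ φ(aᵀ)ᵀ`. -/
noncomputable def mapTranspose (φ : MatMap n) : MatMap n :=
  transposeMap n ∘ₗ φ ∘ₗ transposeMap n

/-- A (symmetric) mapping cone: a nonzero closed convex cone of positive maps of `M_n`
into itself, closed under compositions `α ∘ φ ∘ β` with `α, β` completely positive,
and closed under `φ ↦ φ*` and `φ ↦ φ^t`. -/
structure IsMappingCone (J : Set (MatMap n)) : Prop where
  pos : ∀ φ ∈ J, IsPosMap φ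
  nonzero : ∃ φ ∈ J, φ ≠ 0
  closed : IsClosed ((fun φ : MatMap n => (φ : Mat n → Mat n)) '' J)
  add_mem : ∀ φ ∈ J, ∀ ψ ∈ J, φ + ψ ∈ J
  smul_mem : ∀ c : ℝ, 0 ≤ c → ∀ φ ∈ J, (c : ℂ) • φ ∈ J
  comp_mem : ∀ φ ∈ J, ∀ α β : MatMap n, IsCP α → IsCP β → α ∘ₗ φ ∘ₗ β ∈ J
  adjoint_mem : ∀ φ ∈ J, ∀ ψ : MatMap n, IsAdjointPair φ ψ → ψ ∈ J
  transpose_mem : ∀ φ ∈ J, mapTranspose φ ∈ J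

/-- An invariant mapping cone: a mapping cone closed under compositions
`α ∘ φ ∘ β` with `α, β` arbitrary positive maps. -/
structure IsInvariantMappingCone (J : Set (MatMap n)) extends IsMappingCone J : Prop where
  comp_pos_mem : ∀ φ ∈ J, ∀ α β : MatMap n, IsPosMap α → IsPosMap β → α ∘ₗ φ ∘ₗ β ∈ J

/-- The dual cone `J° = {φ ∈ P : Tr(C_φ C_ψ) ≥ 0 ∀ ψ ∈ J}`. -/
def dualCone (J : Set (MatMap n)) : Set (MatMap n) :=
  {φ | IsPosMap φ ∧ ∀ ψ ∈ J, 0 ≤ (choiMatrix φ * choiMatrix ψ).trace}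

/-- The linear functional `φ̃` on `M_n ⊗ M_n` with `φ̃(a ⊗ b) = Tr(φ(a) bᵀ)`;
equivalently the functional with density matrix `C_φᵗ`. -/
noncomputable def tilde (φ : MatMap n) : BigMat n →ₗ[ℂ] ℂ where
  toFun x := ((choiMatrix φ)ᵀ * x).trace
  map_add' x y := by simp [Matrix.mul_add]
  map_smul' c x := by simp [Matrix.mul_smul]

/-- A positive linear functional on a matrix algebra. -/
def IsPosFunctional {m : Type*} [Fintype m] [DecidableEq m]
    (f : Matrix m m ℂ →ₗ[ℂ] ℂ) : Prop :=
  ∀ x : Matrix m m ℂ, x.PosSemidef → 0 ≤ f x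

/-- The map `ι ⊗ α` on `M_n ⊗ M_n`, acting as `α` on each block. -/
noncomputable def idTensor (α : MatMap n) : BigMat n →ₗ[ℂ] BigMat n where
  toFun x := Matrix.of fun p q => α (Matrix.of fun k l => x (p.1, k) (q.1, l)) p.2 q.2
  map_add' x y := by
    ext p q
    have h : (Matrix.of fun k l => x (p.1, k) (q.1, l) + y (p.1, k) (q.1, l))
        = (Matrix.of fun k l => x (p.1, k) (q.1, l)) +
          (Matrix.of fun k l => y (p.1, k) (q.1, l)) := by
      ext k l; simp
    simp only [Matrix.of_apply, Matrix.add_apply]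
    rw [h, map_add, Matrix.add_apply]
  map_smul' c x := by
    ext p q
    have h : (Matrix.of fun k l => c * x (p.1, k) (q.1, l))
        = c • (Matrix.of fun k l => x (p.1, k) (q.1, l)) := by
      ext k l; simp
    simp only [Matrix.of_apply, Matrix.smul_apply, RingHom.id_apply, smul_eq_mul]
    rw [h, _root_.map_smul, Matrix.smul_apply, smul_eq_mul]

/-- `Ad V : x ↦ V* x V`. -/
noncomputable def adMap (V : Mat n) : MatMap n where
  toFun x := Vᴴ * x * V
  map_add' x y := by simp [Matrix.mul_add, Matrix.add_mul]
  map_smul' c x := by simp [Matrix.mul_smul, Matrix.smul_mul]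

/-- An orthogonal projection in `M_n`. -/
def IsProjection (e : Mat n) : Prop := e * e = e ∧ eᴴ = e

/-- `e` is the range projection of the matrix `a`: the smallest projection `e`
with `e a = a`. -/
def IsRangeProjection (e a : Mat n) : Prop :=
  IsProjection e ∧ e * a = a ∧ ∀ f : Mat n, IsProjection f → f * a = a → f * e = e

/-- `e` is the support projection of the positive map `φ`: the smallest projection
`e` with `φ(e a e) = φ(a)` for all `a`. -/
def IsSupportProjection (e : Mat n) (φ : MatMap n) : Prop :=
  IsProjection e ∧ (∀ a : Mat n, φ (e * a * e) = φ a) ∧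
    ∀ f : Mat n, IsProjection f → (∀ a : Mat n, φ (f * a * f) = φ a) → f * e = e

/-- `D_2`: the smallest invariant mapping cone containing `Ad e` for all rank 2
projections `e`. -/
def D2 (n : ℕ) : Set (MatMap n) :=
  ⋂₀ {J : Set (MatMap n) | IsInvariantMappingCone J ∧
      ∀ e : Mat n, IsProjection e → e.rank = 2 → adMap e ∈ J}

/-- The invariant mapping cone generated by a map `φ`. -/
def genInvCone (φ : MatMap n) : Set (MatMap n) :=
  ⋂₀ {J : Set (MatMap n) | IsInvariantMappingCone J ∧ φ ∈ J}

/-- The smallest mapping cone containing two given sets of maps. -/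
def coneJoin (A B : Set (MatMap n)) : Set (MatMap n) :=
  ⋂₀ {J : Set (MatMap n) | IsMappingCone J ∧ A ⊆ J ∧ B ⊆ J}

/-- `φ` is decomposable, i.e. `φ ∈ CP ⋁ coCP`: a sum of a completely positive and a
co-completely positive map. -/
def Decomposable (φ : MatMap n) : Prop :=
  ∃ α β : MatMap n, IsCP α ∧ IsCoCP β ∧ φ = α + β

/-- `φ` is a PPT-map: both `φ̃` and `φ̃ ∘ (ι ⊗ t)` are positive linear functionals. -/
def IsPPTMap (φ : MatMap n) : Prop :=
  IsPosFunctional (tilde φ) ∧ IsPosFunctional (tilde φ ∘ₗ idTensor (transposeMap n))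

/-- `φ` is an extremal positive map. -/
def IsExtremal (φ : MatMap n) : Prop :=
  IsPosMap φ ∧ ∀ ψ : MatMap n, IsPosMap ψ → IsPosMap (φ - ψ) →
    ∃ l : ℝ, 0 ≤ l ∧ l ≤ 1 ∧ ψ = (l : ℂ) • φ

/-- A `*`-automorphism of `M_n`. -/
def IsStarAut (φ : MatMap n) : Prop :=
  Function.Bijective φ ∧ (∀ a b : Mat n, φ (a * b) = φ a * φ b) ∧
    ∀ a : Mat n, φ aᴴ = (φ a)ᴴ

/-- A `*`-anti-automorphism of `M_n`. -/
def IsStarAntiAut (φ : MatMap n) : Prop :=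
  Function.Bijective φ ∧ (∀ a b : Mat n, φ (a * b) = φ b * φ a) ∧
    ∀ a : Mat n, φ aᴴ = (φ a)ᴴ

-- ## auxiliary lemmas

theorem aux_posSemidef_of_quad {m : Type*} [Fintype m] [DecidableEq m] (A : Matrix m m ℂ)
    (h : ∀ v : m → ℂ, 0 ≤ star v ⬝ᵥ A *ᵥ v) : A.PosSemidef := by
  refine Matrix.posSemidef_iff_dotProduct_mulVec.mpr ⟨?_, h⟩
  rw [Matrix.isHermitian_iff_isSymmetric, LinearMap.isSymmetric_iff_inner_map_self_real]
  intro x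
  have hq := h (fun i => x i)
  have hconj : (starRingEnd ℂ) (star (fun i => x i) ⬝ᵥ A *ᵥ (fun i => x i))
      = star (fun i => x i) ⬝ᵥ A *ᵥ (fun i => x i) :=
    Complex.conj_eq_iff_im.mpr ((Complex.nonneg_iff.mp hq).2.symm)
  have hinner : (inner ℂ ((toEuclideanLin A) x) x : ℂ)
      = ∑ i, (starRingEnd ℂ) ((A *ᵥ fun j => x j) i) * x i := by
    simp only [PiLp.inner_apply, RCLike.inner_apply', toEuclideanLin_apply]
  have h2 : (inner ℂ ((toEuclideanLin A) x) x : ℂ)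
      = (starRingEnd ℂ) (star (fun i => x i) ⬝ᵥ A *ᵥ (fun i => x i)) := by
    rw [hinner]
    simp only [dotProduct, map_sum, _root_.map_mul, starRingEnd_apply, Pi.star_apply, star_star]
    exact Finset.sum_congr rfl fun i _ => mul_comm _ _
  simp [h2, hconj]

open scoped MatrixOrder in
theorem aux_psd_eq_conjTranspose_mul {m : Type*} [Fintype m] [DecidableEq m] {A : Matrix m m ℂ}
    (h : A.PosSemidef) : ∃ B : Matrix m m ℂ, A = Bᴴ * B := by
  obtain ⟨B, hB⟩ := CStarAlgebra.nonneg_iff_eq_star_mul_self.mp h.nonneg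
  exact ⟨B, hB⟩

theorem aux_choi_apply (φ : MatMap n) (p q : Fin n × Fin n) :
    choiMatrix φ p q = φ (Matrix.single p.1 q.1 1) p.2 q.2 := rfl

theorem aux_choi_inj {φ ψ : MatMap n} (h : choiMatrix φ = choiMatrix ψ) : φ = ψ := by
  have hb : ∀ k l : Fin n, φ (Matrix.single k l 1) = ψ (Matrix.single k l 1) := by
    intro k l
    ext r s
    exact congrFun (congrFun h (k, r)) (l, s)
  apply LinearMap.ext; intro a
  conv_lhs => rw [Matrix.matrix_eq_sum_single a]
  conv_rhs => rw [Matrix.matrix_eq_sum_single a]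
  simp only [map_sum]
  refine Finset.sum_congr rfl fun k _ => Finset.sum_congr rfl fun l _ => ?_
  have hs : Matrix.single k l (a k l) = a k l • Matrix.single k l (1:ℂ) := by
    rw [Matrix.smul_single, smul_eq_mul, mul_one]
  rw [hs, _root_.map_smul, _root_.map_smul, hb]

theorem aux_adMap_apply (V : Mat n) (a : Mat n) : adMap V a = Vᴴ * a * V := rfl

theorem aux_choi_adMap (V : Mat n) (p q : Fin n × Fin n) :
    choiMatrix (adMap V) p q = star (V p.1 p.2) * V q.1 q.2 := by
  simp only [aux_choi_apply, aux_adMap_apply]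
  rw [Matrix.mul_apply]
  simp only [Matrix.mul_apply, Matrix.conjTranspose_apply, Matrix.single, Matrix.of_apply]
  simp [Finset.mul_sum, mul_ite, ite_and, Finset.sum_ite_eq, Finset.sum_ite_eq']


theorem aux_choi_sum {ι : Type*} [Fintype ι] (f : ι → MatMap n) (p q : Fin n × Fin n) :
    choiMatrix (∑ i, f i) p q = ∑ i, choiMatrix (f i) p q := by
  simp [aux_choi_apply, LinearMap.sum_apply, Matrix.sum_apply]

theorem aux_isCP_sum_adMap {ι : Type*} [Fintype ι] (V : ι → Mat n) :
    IsCP (∑ i, adMap (V i)) := by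
  apply aux_posSemidef_of_quad
  intro v
  have hC : ∀ p q : Fin n × Fin n,
      choiMatrix (∑ i, adMap (V i)) p q = ∑ i, star (V i p.1 p.2) * V i q.1 q.2 := by
    intro p q
    rw [aux_choi_sum]
    exact Finset.sum_congr rfl fun i _ => aux_choi_adMap (V i) p q
  have e1 : star v ⬝ᵥ choiMatrix (∑ i, adMap (V i)) *ᵥ v
      = ∑ p, ∑ q, ∑ i, star (v p * V i p.1 p.2) * (v q * V i q.1 q.2) := by
    simp only [dotProduct, Matrix.mulVec, Pi.star_apply, dotProduct]
    refine Finset.sum_congr rfl fun p _ => ?_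
    rw [Finset.mul_sum]
    refine Finset.sum_congr rfl fun q _ => ?_
    rw [hC, Finset.sum_mul, Finset.mul_sum]
    refine Finset.sum_congr rfl fun i _ => ?_
    simp only [star_mul', star_star]
    ring
  have e2 : (∑ i, star (∑ q, v q * V i q.1 q.2) * (∑ q, v q * V i q.1 q.2))
      = ∑ i, ∑ p, ∑ q, star (v p * V i p.1 p.2) * (v q * V i q.1 q.2) := by
    refine Finset.sum_congr rfl fun i _ => ?_
    rw [star_sum, Finset.sum_mul_sum]
  have e3 : star v ⬝ᵥ choiMatrix (∑ i, adMap (V i)) *ᵥ v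
      = ∑ i, star (∑ q, v q * V i q.1 q.2) * (∑ q, v q * V i q.1 q.2) := by
    rw [e1, e2]
    exact (Finset.sum_congr rfl fun p _ => Finset.sum_comm).trans Finset.sum_comm
  rw [e3]
  exact Finset.sum_nonneg fun i _ => star_mul_self_nonneg _

theorem aux_kraus {φ : MatMap n} (h : IsCP φ) :
    ∃ V : (Fin n × Fin n) → Mat n, φ = ∑ i, adMap (V i) := by
  obtain ⟨B, hB⟩ := aux_psd_eq_conjTranspose_mul h
  refine ⟨fun i => Matrix.of fun k r => B i (k, r), ?_⟩
  apply aux_choi_inj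
  ext p q
  rw [aux_choi_sum]
  have : ∀ i, choiMatrix (adMap (Matrix.of fun k r => B i (k, r))) p q
      = star (B i p) * B i q := by
    intro i
    rw [aux_choi_adMap]
    rfl
  rw [Finset.sum_congr rfl fun i _ => this i]
  have := congrFun (congrFun hB p) q
  rw [this]
  simp [Matrix.mul_apply, Matrix.conjTranspose_apply]

theorem aux_comp_kraus {ι κ : Type*} [Fintype ι] [Fintype κ] (V : ι → Mat n) (W : κ → Mat n) :
    (∑ i, adMap (V i)) ∘ₗ (∑ j, adMap (W j)) = ∑ p : κ × ι, adMap (W p.1 * V p.2) := by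
  apply LinearMap.ext; intro a
  have e1 : ((∑ i, adMap (V i)) ∘ₗ (∑ j, adMap (W j))) a
      = ∑ i, ∑ j, (W j * V i)ᴴ * a * (W j * V i) := by
    simp only [LinearMap.comp_apply, LinearMap.sum_apply, aux_adMap_apply]
    refine Finset.sum_congr rfl fun i _ => ?_
    rw [Matrix.mul_sum, Matrix.sum_mul]
    refine Finset.sum_congr rfl fun j _ => ?_
    simp [Matrix.conjTranspose_mul, Matrix.mul_assoc]
  have e2 : (∑ p : κ × ι, adMap (W p.1 * V p.2)) a
      = ∑ j, ∑ i, (W j * V i)ᴴ * a * (W j * V i) := by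
    simp [LinearMap.sum_apply, aux_adMap_apply, Fintype.sum_prod_type]
  rw [e1, e2]
  exact Finset.sum_comm

theorem aux_isCP_comp {φ α : MatMap n} (hφ : IsCP φ) (hα : IsCP α) : IsCP (φ ∘ₗ α) := by
  obtain ⟨V, hV⟩ := aux_kraus hφ
  obtain ⟨W, hW⟩ := aux_kraus hα
  rw [hV, hW, aux_comp_kraus]
  exact aux_isCP_sum_adMap _

theorem aux_std_transpose (k l : Fin n) :
    (Matrix.single k l (1:ℂ))ᵀ = Matrix.single l k 1 := by
  ext r s
  simp [Matrix.single, and_comm]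

theorem aux_choi_mapTranspose (φ : MatMap n) :
    choiMatrix (mapTranspose φ) = (choiMatrix φ)ᵀ := by
  ext p q
  show (φ ((Matrix.single p.1 q.1 (1:ℂ))ᵀ))ᵀ p.2 q.2 = choiMatrix φ q p
  rw [aux_std_transpose]
  rfl

theorem aux_isCP_mapTranspose {φ : MatMap n} (h : IsCP φ) : IsCP (mapTranspose φ) := by
  unfold IsCP
  rw [aux_choi_mapTranspose]
  exact h.transpose

theorem aux_choi_t_comp (φ : MatMap n) :
    choiMatrix (transposeMap n ∘ₗ φ) = (choiMatrix (φ ∘ₗ transposeMap n))ᵀ := by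
  ext p q
  show (φ (Matrix.single p.1 q.1 (1:ℂ)))ᵀ p.2 q.2
      = φ ((Matrix.single q.1 p.1 (1:ℂ))ᵀ) q.2 p.2
  rw [aux_std_transpose]
  rfl

theorem aux_t_t : transposeMap n ∘ₗ transposeMap n = LinearMap.id := by
  apply LinearMap.ext; intro a
  show ((aᵀ)ᵀ : Mat n) = a
  rw [Matrix.transpose_transpose]

theorem aux_isCP_id : IsCP (LinearMap.id : MatMap n) := by
  have : (LinearMap.id : MatMap n) = ∑ _i : Fin 1, adMap (1 : Mat n) := by
    apply LinearMap.ext; intro a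
    simp [aux_adMap_apply]
  rw [this]
  exact aux_isCP_sum_adMap _

theorem aux_isCP_zero : IsCP (0 : MatMap n) := by
  have : choiMatrix (0 : MatMap n) = 0 := by ext p q; rfl
  unfold IsCP
  rw [this]
  exact Matrix.PosSemidef.zero


theorem aux_diag_nonneg {m : Type*} [Fintype m] [DecidableEq m] {M : Matrix m m ℂ}
    (h : M.PosSemidef) (i : m) : 0 ≤ M i i := by
  have := h.dotProduct_mulVec_nonneg (Pi.single i 1)
  simpa [dotProduct, Matrix.mulVec, Pi.single_apply, Finset.sum_ite_eq, mul_comm] using this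

theorem aux_trace_nonneg {m : Type*} [Fintype m] [DecidableEq m] {M : Matrix m m ℂ}
    (h : M.PosSemidef) : 0 ≤ M.trace := by
  rw [Matrix.trace]
  exact Finset.sum_nonneg fun i _ => aux_diag_nonneg h i

theorem aux_trace_dual {m : Type*} [Fintype m] [DecidableEq m] (A : Matrix m m ℂ) :
    (∀ x : Matrix m m ℂ, x.PosSemidef → 0 ≤ (Aᵀ * x).trace) ↔ A.PosSemidef := by
  constructor
  · intro h
    apply aux_posSemidef_of_quad
    intro v
    have hx : (Matrix.of fun p q => star (v p) * v q : Matrix m m ℂ).PosSemidef := by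
      have : (Matrix.of fun p q => star (v p) * v q : Matrix m m ℂ)
          = (Matrix.of fun (_ : Fin 1) p => v p)ᴴ * (Matrix.of fun (_ : Fin 1) p => v p) := by
        ext p q
        simp [Matrix.mul_apply, Matrix.conjTranspose_apply]
      rw [this]
      exact Matrix.posSemidef_conjTranspose_mul_self _
    have ht := h _ hx
    have : (Aᵀ * (Matrix.of fun p q => star (v p) * v q)).trace = star v ⬝ᵥ A *ᵥ v := by
      rw [Matrix.trace]
      simp only [Matrix.diag, Matrix.mul_apply, Matrix.transpose_apply, Matrix.of_apply,
        dotProduct, Matrix.mulVec, Pi.star_apply]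
      rw [Finset.sum_comm]
      refine Finset.sum_congr rfl fun p _ => ?_
      rw [Finset.mul_sum]
      refine Finset.sum_congr rfl fun q _ => ?_
      ring
    rwa [this] at ht
  · intro hA x hx
    obtain ⟨B, hB⟩ := aux_psd_eq_conjTranspose_mul hx
    rw [hB, ← Matrix.mul_assoc, Matrix.trace_mul_cycle]
    exact aux_trace_nonneg ((hA.transpose).mul_mul_conjTranspose_same B)


theorem aux_tilde_apply (φ : MatMap n) (x : BigMat n) :
    tilde φ x = ((choiMatrix φ)ᵀ * x).trace := rfl

noncomputable def swapEquiv (n : ℕ) :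
    ((Fin n × Fin n) × (Fin n × Fin n)) ≃ ((Fin n × Fin n) × (Fin n × Fin n)) where
  toFun z := ((z.1.1, z.2.2), (z.2.1, z.1.2))
  invFun z := ((z.1.1, z.2.2), (z.2.1, z.1.2))
  left_inv z := rfl
  right_inv z := rfl

set_option maxHeartbeats 1000000 in
theorem aux_tilde_comp (φ : MatMap n) :
    tilde φ ∘ₗ idTensor (transposeMap n) = tilde (transposeMap n ∘ₗ φ) := by
  apply LinearMap.ext; intro x
  show ((choiMatrix φ)ᵀ * (idTensor (transposeMap n) x)).trace
      = ((choiMatrix (transposeMap n ∘ₗ φ))ᵀ * x).trace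
  rw [Matrix.trace, Matrix.trace]
  simp only [Matrix.diag, Matrix.mul_apply]
  have e1 : (∑ p, ∑ q, (choiMatrix φ)ᵀ p q * (idTensor (transposeMap n) x) q p)
      = ∑ z : (Fin n × Fin n) × (Fin n × Fin n),
          (choiMatrix φ)ᵀ z.1 z.2 * (idTensor (transposeMap n) x) z.2 z.1 :=
    (Fintype.sum_prod_type (fun z : (Fin n × Fin n) × (Fin n × Fin n) =>
      (choiMatrix φ)ᵀ z.1 z.2 * (idTensor (transposeMap n) x) z.2 z.1)).symm
  have e2 : (∑ p, ∑ q, (choiMatrix (transposeMap n ∘ₗ φ))ᵀ p q * x q p)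
      = ∑ z : (Fin n × Fin n) × (Fin n × Fin n),
          (choiMatrix (transposeMap n ∘ₗ φ))ᵀ z.1 z.2 * x z.2 z.1 :=
    (Fintype.sum_prod_type (fun z : (Fin n × Fin n) × (Fin n × Fin n) =>
      (choiMatrix (transposeMap n ∘ₗ φ))ᵀ z.1 z.2 * x z.2 z.1)).symm
  rw [e1, e2]
  exact Fintype.sum_equiv (swapEquiv n) _ _ (fun z => rfl)


theorem aux_isCP_add {φ ψ : MatMap n} (h1 : IsCP φ) (h2 : IsCP ψ) : IsCP (φ + ψ) := by
  have : choiMatrix (φ + ψ) = choiMatrix φ + choiMatrix ψ := by ext p q; rfl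
  unfold IsCP
  rw [this]
  exact h1.add h2

theorem aux_isPPT_iff (φ : MatMap n) : IsPPTMap φ ↔ IsCP φ ∧ IsCoCP φ := by
  have h1 : IsPosFunctional (tilde φ) ↔ IsCP φ := by
    unfold IsPosFunctional
    simp only [aux_tilde_apply]
    exact aux_trace_dual (choiMatrix φ)
  have h2 : IsPosFunctional (tilde φ ∘ₗ idTensor (transposeMap n)) ↔ IsCoCP φ := by
    rw [aux_tilde_comp]
    unfold IsPosFunctional
    simp only [aux_tilde_apply]
    exact aux_trace_dual (choiMatrix (transposeMap n ∘ₗ φ))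
  unfold IsPPTMap
  rw [h1, h2]

theorem aux_isCoCP_zero : IsCoCP (0 : MatMap n) := by
  unfold IsCoCP
  have : transposeMap n ∘ₗ (0 : MatMap n) = 0 := by
    apply LinearMap.ext; intro a; simp
  rw [this]
  exact aux_isCP_zero

/-- Proposition 10. For `φ ∈ P` the following are equivalent:
(i) `φ ∈ CP ∩ coCP`; (ii) `φ ∘ α ∈ CP` for all `α ∈ CP ⋁ coCP`; (iii) `φ` is a
PPT-map. -/
theorem statement_13 (n : ℕ) (φ : MatMap n) (hφ : IsPosMap φ) :
    List.TFAE [IsCP φ ∧ IsCoCP φ,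
      ∀ α : MatMap n, Decomposable α → IsCP (φ ∘ₗ α),
      IsPPTMap φ] := by
  tfae_have 1 → 2 := by
    rintro ⟨h1, h2⟩ α ⟨a, b, ha, hb, rfl⟩
    have hsplit : φ ∘ₗ (a + b) = φ ∘ₗ a + φ ∘ₗ b := by
      apply LinearMap.ext; intro x; simp
    rw [hsplit]
    have hb' : φ ∘ₗ b = mapTranspose (transposeMap n ∘ₗ φ) ∘ₗ (transposeMap n ∘ₗ b) := by
      apply LinearMap.ext; intro x
      show φ (b x) = _
      simp [mapTranspose, transposeMap, LinearMap.comp_apply]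
    exact aux_isCP_add (aux_isCP_comp h1 ha)
      (by rw [hb']; exact aux_isCP_comp (aux_isCP_mapTranspose h2) hb)
  tfae_have 2 → 1 := by
    intro h
    constructor
    · have hdec : Decomposable (LinearMap.id : MatMap n) :=
        ⟨LinearMap.id, 0, aux_isCP_id, aux_isCoCP_zero, by simp⟩
      have := h _ hdec
      rwa [LinearMap.comp_id] at this
    · have htt : IsCoCP (transposeMap n) := by
        unfold IsCoCP
        rw [aux_t_t]
        exact aux_isCP_id
      have hdec : Decomposable (transposeMap n) :=
        ⟨0, transposeMap n, aux_isCP_zero, htt, by simp⟩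
      have h2 := h _ hdec
      show IsCP (transposeMap n ∘ₗ φ)
      unfold IsCP
      rw [aux_choi_t_comp]
      exact h2.transpose
  tfae_have 1 ↔ 3 := (aux_isPPT_iff φ).symm
  tfae_finish

end Paper
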